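/- No-idling lemma for nested-group scheduling: under q_0 | q_1 | ... | q_M | p, in the incremental greedy schedule, at any time before all tasks have been assigned, every processor is executing some task; equivalently, if the last-finishing task starts at time w_s, then every processor has total load at least w_s, so w_s ≤ W_T/p. -/

import Mathlib

open Finset

/-- The `k`-th contiguous block of `q` processors among `Fin p`. -/
def block (p q k : ℕ) : Finset (Fin p) :=
  Finset.univ.filter (fun i => k * q ≤ (i : ℕ) ∧ (i : ℕ) < (k + 1) * q)

/-- The current completion time (maximal load) of the `k`-th block of `q`
processors; a task assigned to this block starts at this time. -/
noncomputable def blockMax {p : ℕ} (load : Fin p → ℝ) (q k : ℕ) : ℝ :=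
  if h : (block p q k).Nonempty then (block p q k).sup' h load else 0

/-- `GreedyRun p tasks load final starts`: starting from per-processor loads
`load`, the incremental greedy algorithm processes the list `tasks` (each task
is a pair `(q, w)` of processor requirement and execution time) in order,
assigning each task to a least-loaded group of `q` processors; `final` are the
resulting loads and `starts` records the start time of each task. -/
inductive GreedyRun (p : ℕ) :
    List (ℕ × ℝ) → (Fin p → ℝ) → (Fin p → ℝ) → List ℝ → Prop
  | nil (load : Fin p → ℝ) : GreedyRun p [] load load []
  | cons (q : ℕ) (w : ℝ) (k : ℕ) (rest : List (ℕ × ℝ))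
      (load final : Fin p → ℝ) (starts : List ℝ)
      (hk : k < p / q)
      (hmin : ∀ k' < p / q, blockMax load q k ≤ blockMax load q k')
      (hrun : GreedyRun p rest
        (fun i => if i ∈ block p q k then blockMax load q k + w else load i)
        final starts) :
      GreedyRun p ((q, w) :: rest) load final (blockMax load q k :: starts)

lemma mem_block_iff {p q : ℕ} (hq : 0 < q) (i : Fin p) (k : ℕ) :
    i ∈ block p q k ↔ (i : ℕ) / q = k := by
  simp only [block, Finset.mem_filter, Finset.mem_univ, true_and]
  constructor
  · rintro ⟨h1, h2⟩; exact Nat.div_eq_of_lt_le h1 h2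
  · intro h
    subst h
    refine ⟨Nat.div_mul_le_self _ q, ?_⟩
    have h := Nat.mod_lt (i : ℕ) hq
    have h2 := Nat.div_add_mod (i : ℕ) q
    nlinarith

lemma self_mem_block {p q : ℕ} (hq : 0 < q) (i : Fin p) :
    i ∈ block p q ((i : ℕ) / q) := (mem_block_iff hq i _).2 rfl

lemma block_nonempty {p q k : ℕ} (hq : 0 < q) (hk : k < p / q) :
    (block p q k).Nonempty := by
  have hkq : k * q < p := by
    calc k * q < (k + 1) * q := by nlinarith
    _ ≤ (p / q) * q := Nat.mul_le_mul_right q hk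
    _ ≤ p := Nat.div_mul_le_self p q
  exact ⟨⟨k * q, hkq⟩, by
    simp only [block, Finset.mem_filter, Finset.mem_univ, true_and]
    constructor
    · rfl
    · nlinarith⟩

lemma card_block {p q k : ℕ} (hq : 0 < q) (hqp : q ∣ p) (hk : k < p / q) :
    (block p q k).card = q := by
  have hle : (k + 1) * q ≤ p := by
    calc (k + 1) * q ≤ (p / q) * q := Nat.mul_le_mul_right q hk
    _ = p := Nat.div_mul_cancel hqp
  have : (block p q k).card = (Finset.Ico (k * q) ((k + 1) * q)).card := by
    refine Finset.card_bij (fun i _ => (i : ℕ)) ?_ ?_ ?_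
    · intro i hi
      simp only [block, Finset.mem_filter, Finset.mem_univ, true_and] at hi
      exact Finset.mem_Ico.2 hi
    · intro a _ b _ h; exact Fin.ext h
    · intro n hn
      rw [Finset.mem_Ico] at hn
      exact ⟨⟨n, lt_of_lt_of_le hn.2 hle⟩, by
        simp only [block, Finset.mem_filter, Finset.mem_univ, true_and]; exact hn, rfl⟩
  rw [this, Nat.card_Ico, add_one_mul, Nat.add_sub_cancel_left]

lemma blockMax_eq_of_const {p q k : ℕ} (hq : 0 < q) (load : Fin p → ℝ)
    (hconst : ∀ i j : Fin p, (i : ℕ) / q = (j : ℕ) / q → load i = load j)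
    {i : Fin p} (hi : i ∈ block p q k) : blockMax load q k = load i := by
  have hne : (block p q k).Nonempty := ⟨i, hi⟩
  rw [blockMax, dif_pos hne]
  apply le_antisymm
  · apply Finset.sup'_le
    intro j hj
    have := hconst j i (by
      rw [mem_block_iff hq] at hi hj; omega)
    exact le_of_eq this
  · exact Finset.le_sup' load hi

section Main

variable {p : ℕ}

lemma greedy_main (hp : 0 < p) :
    ∀ (tasks : List (ℕ × ℝ)) (load final : Fin p → ℝ) (starts : List ℝ),
    GreedyRun p tasks load final starts →
    (∀ t ∈ tasks, 0 < t.1 ∧ t.1 ∣ p ∧ 0 < t.2) →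
    (∀ a ∈ tasks, ∀ b ∈ tasks, a.1 ≤ b.1 → a.1 ∣ b.1) →
    tasks.Pairwise (fun a b => b.1 ≤ a.1) →
    (∀ t ∈ tasks, ∀ i j : Fin p, (i : ℕ) / t.1 = (j : ℕ) / t.1 → load i = load j) →
    (∀ j, load j ≤ final j) ∧
    (∑ j, final j) = (∑ j, load j) + (tasks.map (fun t => (t.1 : ℝ) * t.2)).sum ∧
    (∀ s ∈ starts, ∀ j, s ≤ final j) := by
  intro tasks load final starts hrun
  induction hrun with
  | nil load => simp
  | cons q w k rest load final starts hk hmin hrun ih =>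
    intro hbasic hdvd hsorted hconst
    have hhead : 0 < q ∧ q ∣ p ∧ 0 < w := hbasic (q, w) (by simp)
    obtain ⟨hq, hqp, hw⟩ := hhead
    have hconstq : ∀ i j : Fin p, (i : ℕ) / q = (j : ℕ) / q → load i = load j :=
      hconst (q, w) (by simp)
    set newload : Fin p → ℝ :=
      fun i => if i ∈ block p q k then blockMax load q k + w else load i with hnew
    -- start time is ≤ every current load
    have hstart_le : ∀ j : Fin p, blockMax load q k ≤ load j := by
      intro j
      have hjk : (j : ℕ) / q < p / q := Nat.div_lt_div_of_lt_of_dvd hqp j.2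
      calc blockMax load q k ≤ blockMax load q ((j : ℕ) / q) := hmin _ hjk
        _ = load j := blockMax_eq_of_const hq load hconstq (self_mem_block hq j)
    -- loads only grow
    have hmono : ∀ j, load j ≤ newload j := by
      intro j
      simp only [hnew]
      split
      · rename_i hj
        rw [blockMax_eq_of_const hq load hconstq hj]
        linarith
      · exact le_refl _
    -- newload is constant on blocks of size q' for remaining tasks
    have hconst' : ∀ t ∈ rest, ∀ i j : Fin p,
        (i : ℕ) / t.1 = (j : ℕ) / t.1 → newload i = newload j := by
      intro t ht i j hij
      have htq : t.1 ∣ q := by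
        have hle : t.1 ≤ q := (List.rel_of_pairwise_cons hsorted ht)
        exact hdvd t (by simp [ht]) (q, w) (by simp) hle
      obtain ⟨m, hm⟩ := htq
      have hiq : (i : ℕ) / q = (j : ℕ) / q := by
        rw [hm, ← Nat.div_div_eq_div_mul, ← Nat.div_div_eq_div_mul, hij]
      have hload : load i = load j := hconstq i j hiq
      simp only [hnew, mem_block_iff hq, hiq, hload]
    -- IH
    have := ih (fun t ht => hbasic t (by simp [ht]))
      (fun a ha b hb => hdvd a (by simp [ha]) b (by simp [hb]))
      hsorted.of_cons hconst'
    obtain ⟨ihmono, ihsum, ihstarts⟩ := this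
    refine ⟨?_, ?_, ?_⟩
    · intro j; exact le_trans (hmono j) (ihmono j)
    · -- sum
      have hblocksum : ∑ j, newload j = (∑ j, load j) + (q : ℝ) * w := by
        have heach : ∀ j, newload j = load j + (if j ∈ block p q k then w else 0) := by
          intro j
          simp only [hnew]
          split
          · rename_i hj
            rw [blockMax_eq_of_const hq load hconstq hj]
          · ring
        calc ∑ j, newload j = ∑ j, (load j + (if j ∈ block p q k then w else 0)) := by
              exact Finset.sum_congr rfl (fun j _ => heach j)
          _ = (∑ j, load j) + ∑ j, (if j ∈ block p q k then w else 0) := Finset.sum_add_distrib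
          _ = (∑ j, load j) + (q : ℝ) * w := by
              rw [Finset.sum_ite_mem, Finset.univ_inter, Finset.sum_const,
                card_block hq hqp hk, nsmul_eq_mul]
      rw [List.map_cons, List.sum_cons, ihsum, hblocksum]
      ring
    · intro s hs j
      rcases List.mem_cons.1 hs with rfl | hs'
      · exact le_trans (hstart_le j) (le_trans (hmono j) (ihmono j))
      · exact ihstarts s hs' j

end Main

/-- no-idling lemma for nested-group scheduling. Under the
divisibility chain `q_0 ∣ q_1 ∣ … ∣ q_M ∣ p`, in the incremental greedy
schedule (tasks in order of decreasing processor requirement, each assigned to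
a least-loaded group) no processor idles while tasks remain: the start time of
every task — in particular of the last-finishing one — is at most the final
total load of every processor, and hence at most `W_T / p` where
`W_T = Σ q·w` is the total work. -/
theorem incremental_greedy_no_idling {p M : ℕ} (hp : 0 < p)
    (qs : ℕ → ℕ) (hq : ∀ ℓ ≤ M, 0 < qs ℓ)
    (hchain : ∀ ℓ < M, qs ℓ ∣ qs (ℓ + 1)) (hqp : qs M ∣ p)
    (tasks : List (ℕ × ℝ))
    (hreq : ∀ t ∈ tasks, ∃ ℓ ≤ M, t.1 = qs ℓ)
    (hpos : ∀ t ∈ tasks, 0 < t.2)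
    (hsorted : tasks.Pairwise (fun a b => b.1 ≤ a.1))
    (final : Fin p → ℝ) (starts : List ℝ)
    (hrun : GreedyRun p tasks (fun _ => 0) final starts) :
    ∀ s ∈ starts,
      (∀ j : Fin p, s ≤ final j) ∧
      s ≤ (tasks.map (fun t => (t.1 : ℝ) * t.2)).sum / p := by
  -- chain divisibility
  have hchain' : ∀ a b : ℕ, a ≤ b → b ≤ M → qs a ∣ qs b := by
    intro a b hab hbM
    induction b with
    | zero => interval_cases a; rfl
    | succ n ihn =>
      rcases Nat.lt_or_ge a (n + 1) with h | h
      · exact dvd_trans (ihn (by omega) (by omega)) (hchain n (by omega))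
      · have : a = n + 1 := by omega
        subst this; rfl
  have hbasic : ∀ t ∈ tasks, 0 < t.1 ∧ t.1 ∣ p ∧ 0 < t.2 := by
    intro t ht
    obtain ⟨ℓ, hℓ, hq1⟩ := hreq t ht
    exact ⟨hq1 ▸ hq ℓ hℓ, hq1 ▸ dvd_trans (hchain' ℓ M hℓ le_rfl) hqp, hpos t ht⟩
  have hdvd : ∀ a ∈ tasks, ∀ b ∈ tasks, a.1 ≤ b.1 → a.1 ∣ b.1 := by
    intro a ha b hb hab
    obtain ⟨ℓ₁, hℓ₁, h1⟩ := hreq a ha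
    obtain ⟨ℓ₂, hℓ₂, h2⟩ := hreq b hb
    rcases Nat.le_total ℓ₁ ℓ₂ with h | h
    · rw [h1, h2]; exact hchain' ℓ₁ ℓ₂ h hℓ₂
    · have hd : qs ℓ₂ ∣ qs ℓ₁ := hchain' ℓ₂ ℓ₁ h hℓ₁
      have hle := Nat.le_of_dvd (hq ℓ₁ hℓ₁) hd
      have heq : a.1 = b.1 := by omega
      rw [heq]
  have hconst0 : ∀ t ∈ tasks, ∀ i j : Fin p,
      (i : ℕ) / t.1 = (j : ℕ) / t.1 → (fun _ : Fin p => (0:ℝ)) i = (fun _ : Fin p => (0:ℝ)) j :=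
    fun _ _ _ _ _ => rfl
  obtain ⟨hmono, hsum, hstarts⟩ :=
    greedy_main hp tasks (fun _ => 0) final starts hrun hbasic hdvd hsorted hconst0
  intro s hs
  refine ⟨hstarts s hs, ?_⟩
  have hsums : (p : ℝ) * s ≤ ∑ j, final j := by
    calc (p : ℝ) * s = ∑ _j : Fin p, s := by
          rw [Finset.sum_const, Finset.card_univ, Fintype.card_fin, nsmul_eq_mul]
      _ ≤ ∑ j, final j := Finset.sum_le_sum (fun j _ => hstarts s hs j)
  have hW : ∑ j, final j = (tasks.map (fun t => (t.1 : ℝ) * t.2)).sum := by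
    rw [hsum]; simp
  rw [le_div_iff₀ (by exact_mod_cast hp)]
  rw [hW] at hsums
  linarith
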